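/- Let G be a (2k−2)-edge-connected multigraph, k a positive integer, and f : V(G) → Z_k a mapping with (k−1)·∑_{v∈V(G)} f(v) even. If f is compatible with G with respect to some bipartition (X,Y) of V(G) satisfying e_G(X) + e_G(Y) ≤ k − 1, then f is compatible with G with respect to every bipartition of V(G). -/

import Mathlib

namespace MG

variable {V E : Type} [Fintype V] [Fintype E] [DecidableEq V] [DecidableEq E]

/-- Degree of `v` in the spanning subgraph with edge set `S`; loops count twice. -/
def deg (ends : E → V × V) (S : Finset E) (v : V) : ℕ :=
  (S.filter fun e => (ends e).1 = v).card + (S.filter fun e => (ends e).2 = v).card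

/-- Edges of `S` with exactly one end in `A`. -/
def cut (ends : E → V × V) (S : Finset E) (A : Finset V) : Finset E :=
  S.filter fun e => ¬ (((ends e).1 ∈ A) ↔ ((ends e).2 ∈ A))

/-- Edges of `S` with both ends in `A`. -/
def inside (ends : E → V × V) (S : Finset E) (A : Finset V) : Finset E :=
  S.filter fun e => (ends e).1 ∈ A ∧ (ends e).2 ∈ A

/-- `m`-edge-connected: every edge cut has at least `m` edges. -/
def EdgeConn (ends : E → V × V) (m : ℕ) : Prop :=
  ∀ A : Finset V, A.Nonempty → A ≠ Finset.univ → m ≤ (cut ends Finset.univ A).card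

/-- Essentially `lam`-edge-connected: every edge cut of size `< lam` has all its
edges incident with one common vertex. -/
def EssEdgeConn (ends : E → V × V) (lam : ℕ) : Prop :=
  ∀ A : Finset V, A.Nonempty → A ≠ Finset.univ →
    (cut ends Finset.univ A).card < lam →
      ∃ v : V, ∀ e ∈ cut ends Finset.univ A, (ends e).1 = v ∨ (ends e).2 = v

/-- The edge set `S` induces a bipartite graph. -/
def BipOn (ends : E → V × V) (S : Finset E) : Prop :=
  ∃ X : Finset V, ∀ e ∈ S, ¬ (((ends e).1 ∈ X) ↔ ((ends e).2 ∈ X))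

/-- Edges of `S` not crossing the bipartition `(X, Xᶜ)`. -/
def bad (ends : E → V × V) (S : Finset E) (X : Finset V) : Finset E :=
  S.filter fun e => (((ends e).1 ∈ X) ↔ ((ends e).2 ∈ X))

/-- The bipartite index: fewest edge deletions making the graph `(V, S)` bipartite. -/
def biIndexOn (ends : E → V × V) (S : Finset E) : ℕ :=
  Finset.univ.inf' Finset.univ_nonempty fun X : Finset V => (bad ends S X).card

/-- Adjacency via an edge of `S`. -/
def adjOn (ends : E → V × V) (S : Finset E) (a b : V) : Prop :=
  ∃ e ∈ S, ends e = (a, b) ∨ ends e = (b, a)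

/-- The spanning subgraph with edge set `S` is connected. -/
def ConnOn (ends : E → V × V) (S : Finset E) : Prop :=
  ∀ a b : V, Relation.ReflTransGen (adjOn ends S) a b

/-- `T` is the edge set of a spanning tree. -/
def IsSpTree (ends : E → V × V) (T : Finset E) : Prop :=
  ConnOn ends T ∧ T.card + 1 = Fintype.card V

/-- `m`-tree-connected inside `S`: `m` pairwise edge-disjoint spanning trees using edges of `S`. -/
def TreeConnOn (ends : E → V × V) (m : ℕ) (S : Finset E) : Prop :=
  ∃ T : Fin m → Finset E, (∀ i, T i ⊆ S ∧ IsSpTree ends (T i)) ∧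
    ∀ i j, i ≠ j → Disjoint (T i) (T j)

/-- `C` is the edge set of an odd cycle: odd, nonempty, 2-regular on its support and
connected on its support. -/
def IsOddCycle (ends : E → V × V) (C : Finset E) : Prop :=
  C.Nonempty ∧ Odd C.card ∧ (∀ v : V, deg ends C v = 0 ∨ deg ends C v = 2) ∧
    ∀ a b : V, 0 < deg ends C a → 0 < deg ends C b →
      Relation.ReflTransGen (adjOn ends C) a b

/-- `f` is compatible with the graph with respect to the bipartition `(X, Xᶜ)`. -/
def CompatAt (ends : E → V × V) {k : ℕ} (f : V → ZMod k) (X : Finset V) : Prop :=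
  (∃ x : ℕ, x ≤ (inside ends Finset.univ X).card ∧
    (∑ v ∈ X, f v) - ((2 * x : ℕ) : ZMod k) = ∑ v ∈ Xᶜ, f v) ∨
  (∃ y : ℕ, y ≤ (inside ends Finset.univ Xᶜ).card ∧
    (∑ v ∈ X, f v) = (∑ v ∈ Xᶜ, f v) - ((2 * y : ℕ) : ZMod k))

end MG

open MG Finset


section Aux

variable {V E : Type} [Fintype V] [Fintype E] [DecidableEq V] [DecidableEq E]

theorem compat_of_big (ends : E → V × V) (k : ℕ) (hk : 0 < k) (f : V → ZMod k)
    (hpar : Odd k ∨ Even (∑ v : V, (f v).val))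
    (X : Finset V)
    (hm : k - 1 ≤ (inside ends Finset.univ X).card + (inside ends Finset.univ Xᶜ).card) :
    CompatAt ends f X := by
  haveI : NeZero k := ⟨hk.ne'⟩
  unfold CompatAt
  set s := ∑ v ∈ X, f v with hsdef
  set t := ∑ v ∈ Xᶜ, f v with htdef
  have hst : s + t = ((∑ v : V, (f v).val : ℕ) : ZMod k) := by
    rw [hsdef, htdef, Finset.sum_add_sum_compl, Nat.cast_sum]
    exact Finset.sum_congr rfl fun v _ => by
      rw [ZMod.natCast_val, ZMod.cast_id]
  obtain ⟨c, hc⟩ : ∃ c : ZMod k, 2 * c = s - t := by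
    rcases hpar with hodd | ⟨T', hT⟩
    · refine ⟨(((k+1)/2 : ℕ) : ZMod k) * (s - t), ?_⟩
      have h2 : ((2 * ((k+1)/2) : ℕ) : ZMod k) = 1 := by
        obtain ⟨m, hm'⟩ := hodd
        have he : 2 * ((k+1)/2) = k + 1 := by omega
        rw [he]
        push_cast
        simp
      calc 2 * ((((k+1)/2 : ℕ) : ZMod k) * (s - t))
          = ((2 * ((k+1)/2) : ℕ) : ZMod k) * (s - t) := by push_cast; ring
        _ = s - t := by rw [h2, one_mul]
    · refine ⟨((T' : ℕ) : ZMod k) - t, ?_⟩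
      have h2 : ((∑ v : V, (f v).val : ℕ) : ZMod k) = 2 * ((T' : ℕ) : ZMod k) := by
        rw [hT]; push_cast; ring
      rw [mul_sub, ← h2, ← hst]; ring
  set x₀ := c.val with hx₀def
  have hx₀k : x₀ < k := ZMod.val_lt c
  have hcast : ((x₀ : ℕ) : ZMod k) = c := by
    rw [hx₀def, ZMod.natCast_val, ZMod.cast_id]
  by_cases hx : x₀ ≤ (inside ends Finset.univ X).card
  · refine Or.inl ⟨x₀, hx, ?_⟩
    have h1 : ((2 * x₀ : ℕ) : ZMod k) = s - t := by
      rw [Nat.cast_mul, hcast, Nat.cast_ofNat, hc]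
    rw [h1]; ring
  · refine Or.inr ⟨k - x₀, by omega, ?_⟩
    have hkx : ((k - x₀ : ℕ) : ZMod k) = - c := by
      rw [Nat.cast_sub hx₀k.le, ZMod.natCast_self, hcast]; ring
    have h1 : ((2 * (k - x₀) : ℕ) : ZMod k) = t - s := by
      rw [Nat.cast_mul, hkx, Nat.cast_ofNat]
      linear_combination -hc
    rw [h1]; ring

theorem compat_compl (ends : E → V × V) (k : ℕ) (f : V → ZMod k)
    (X : Finset V) (h : CompatAt ends f X) : CompatAt ends f Xᶜ := by
  unfold CompatAt at h ⊢
  rw [compl_compl]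
  rcases h with ⟨x, hx, he⟩ | ⟨y, hy, he⟩
  · exact Or.inr ⟨x, hx, he.symm⟩
  · exact Or.inl ⟨y, hy, he.symm⟩

end Aux

theorem stmt9 {V E : Type} [Fintype V] [Fintype E] [DecidableEq V] [DecidableEq E]
    (ends : E → V × V) (k : ℕ) (hk : 0 < k) (f : V → ZMod k)
    (hconn : EdgeConn ends (2 * k - 2))
    (hsum : Even ((k - 1) * ∑ v : V, (f v).val))
    (X₀ : Finset V)
    (hX₀ : (inside ends Finset.univ X₀).card + (inside ends Finset.univ X₀ᶜ).card ≤ k - 1)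
    (hcompat : CompatAt ends f X₀) :
    ∀ X : Finset V, CompatAt ends f X := by
  haveI : NeZero k := ⟨hk.ne'⟩
  intro X
  have hpar : Odd k ∨ Even (∑ v : V, (f v).val) := by
    rcases Nat.even_or_odd k with he | ho
    · right
      rcases Nat.even_mul.mp hsum with h1 | h2
      · obtain ⟨a, ha⟩ := he; obtain ⟨b, hb⟩ := h1; omega
      · exact h2
    · exact Or.inl ho
  by_cases hbig : k - 1 ≤ (inside ends Finset.univ X).card + (inside ends Finset.univ Xᶜ).card
  · exact compat_of_big ends k hk f hpar X hbig
  · push_neg at hbig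
    have hk2 : 2 ≤ k := by omega
    set B : Finset V := Finset.univ.filter (fun v => ¬((v ∈ X) ↔ (v ∈ X₀))) with hB
    have hsub : cut ends Finset.univ B ⊆
        (Finset.univ.filter fun e : E => (((ends e).1 ∈ X) ↔ ((ends e).2 ∈ X))) ∪
        (Finset.univ.filter fun e : E => (((ends e).1 ∈ X₀) ↔ ((ends e).2 ∈ X₀))) := by
      intro e he
      simp only [cut, hB, Finset.mem_filter, Finset.mem_union, Finset.mem_univ, true_and] at he ⊢
      tauto
    have hcard : ∀ Y : Finset V,
        (Finset.univ.filter fun e : E => (((ends e).1 ∈ Y) ↔ ((ends e).2 ∈ Y))).card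
          = (inside ends Finset.univ Y).card + (inside ends Finset.univ Yᶜ).card := by
      intro Y
      rw [← Finset.card_union_of_disjoint (by
        rw [Finset.disjoint_left]
        intro e h1 h2
        simp only [inside, Finset.mem_filter, Finset.mem_compl] at h1 h2
        tauto)]
      congr 1
      ext e
      simp only [inside, Finset.mem_filter, Finset.mem_union, Finset.mem_compl,
        Finset.mem_univ, true_and]
      tauto
    have hlt : (cut ends Finset.univ B).card ≤ 2 * k - 3 := by
      calc (cut ends Finset.univ B).card
          ≤ _ := Finset.card_le_card hsub
        _ ≤ _ := Finset.card_union_le _ _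
        _ = ((inside ends Finset.univ X).card + (inside ends Finset.univ Xᶜ).card)
            + ((inside ends Finset.univ X₀).card + (inside ends Finset.univ X₀ᶜ).card) := by
            rw [hcard X, hcard X₀]
        _ ≤ 2 * k - 3 := by omega
    have hBcases : B = ∅ ∨ B = Finset.univ := by
      by_contra hcon
      push_neg at hcon
      have hne : B.Nonempty := hcon.1
      have hcc := hconn B hne hcon.2
      omega
    rcases hBcases with h0 | h1
    · have hXX : X = X₀ := by
        ext v
        have hv := Finset.eq_empty_iff_forall_notMem.mp h0 v
        simp only [hB, Finset.mem_filter, Finset.mem_univ, true_and] at hv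
        tauto
      rw [hXX]; exact hcompat
    · have hXX : X = X₀ᶜ := by
        ext v
        have hv : v ∈ B := h1 ▸ Finset.mem_univ v
        simp only [hB, Finset.mem_filter, Finset.mem_univ, true_and] at hv
        simp only [Finset.mem_compl]
        tauto
      rw [hXX]; exact compat_compl ends k f X₀ hcompat
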